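/- For l a loop based at a vertex v and any n ∈ ℕ, ⟨ξ_v, (L_l + L_l*)^n ξ_v⟩ equals 0 when n is odd, and equals the n/2-th Catalan number when n is even. In particular the operator L_l + L_l* is even with moments given by Catalan numbers with respect to the vector state at ξ_v. -/

import Mathlib

noncomputable section

/-- The graph Hilbert space `H_G = ℓ²(F⁺(G))`. -/
abbrev HG (W : Type) : Type := lp (fun _ : W => ℂ) 2

/-- The canonical orthonormal basis vector `ξ_w`. -/
noncomputable def xi {W : Type} [DecidableEq W] (w : W) : HG W := lp.single 2 w 1

/-- For `l` a loop based at a vertex `v` (with all powers `l^k` distinct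
admissible loops), the moments of `L_l + L_l*` in the vector state at `ξ_v` are the Catalan
numbers: `⟨ξ_v, (L_l + L_l*)^n ξ_v⟩ = 0` for `n` odd, and `= C_{n/2}` for `n` even. -/

private def bb : ℕ → ℕ → ℕ
  | 0, 0 => 1
  | 0, _+1 => 0
  | n+1, 0 => bb n 1
  | n+1, k+1 => bb n k + bb n (k+2)

private def ch (n : ℕ) (j : ℤ) : ℤ := if 0 ≤ j then n.choose j.toNat else 0

private lemma ch_neg {n : ℕ} {j : ℤ} (h : j < 0) : ch n j = 0 := if_neg (not_le.2 h)

private lemma ch_nat (n t : ℕ) : ch n (t : ℤ) = n.choose t := by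
  unfold ch; rw [if_pos (Int.natCast_nonneg t)]; simp

private lemma ch_pascal (n : ℕ) (j : ℤ) : ch (n+1) j = ch n j + ch n (j-1) := by
  rcases lt_trichotomy j 0 with h | h | h
  · rw [ch_neg h, ch_neg h, ch_neg (by omega)]; ring
  · subst h
    rw [ch_neg (by norm_num : (0:ℤ) - 1 < 0)]
    show ch (n+1) ((0:ℕ) : ℤ) = ch n ((0:ℕ):ℤ) + 0
    rw [ch_nat, ch_nat]; simp
  · obtain ⟨t, rfl⟩ : ∃ t : ℕ, j = (t : ℤ) + 1 := ⟨(j-1).toNat, by omega⟩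
    have h1 : ((t:ℤ) + 1) = ((t+1 : ℕ) : ℤ) := by push_cast; ring
    rw [h1]
    have h2 : ((t+1:ℕ):ℤ) - 1 = ((t : ℕ) : ℤ) := by push_cast; ring
    rw [h2, ch_nat, ch_nat, ch_nat, Nat.choose_succ_succ']
    push_cast; ring

private def EE (n k : ℕ) : ℤ :=
  if (n + k) % 2 = 0 then ch n (((n:ℤ) - k)/2) - ch n (((n:ℤ) - k)/2 - 1) else 0

private lemma EE_odd {n k : ℕ} (hp : (n + k) % 2 = 1) : EE n k = 0 := by
  unfold EE; rw [if_neg (by omega)]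

private lemma EE_eval {n k : ℕ} {j : ℤ} (hp : (n + k) % 2 = 0) (hj : (n:ℤ) - k = 2*j) :
    EE n k = ch n j - ch n (j-1) := by
  unfold EE; rw [if_pos hp, hj, Int.mul_ediv_cancel_left _ two_ne_zero]

private lemma bbE : ∀ n k, (bb n k : ℤ) = EE n k := by
  intro n
  induction n with
  | zero =>
    intro k
    match k with
    | 0 =>
      rw [EE_eval (by simp) (by norm_num : ((0:ℕ):ℤ) - ((0:ℕ):ℤ) = 2*0)]
      rw [ch_neg (by norm_num : (0:ℤ) - 1 < 0)]
      show ((bb 0 0 : ℕ) : ℤ) = ch 0 ((0:ℕ):ℤ) - 0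
      rw [ch_nat]; simp [bb]
    | k+1 =>
      have hEE : EE 0 (k+1) = 0 := by
        unfold EE
        split
        · have h1 : ((0:ℕ):ℤ) - ((k+1:ℕ):ℤ) = -((k:ℤ)+1) := by push_cast; ring
          rw [h1, ch_neg (by omega), ch_neg (by omega)]; ring
        · rfl
      rw [hEE]
      simp [bb]
  | succ n IH =>
    intro k
    by_cases hp : (n + 1 + k) % 2 = 0
    · obtain ⟨j, hj⟩ : ∃ j : ℤ, (n:ℤ) + 1 - k = 2*j := ⟨((n:ℤ)+1-k)/2, by omega⟩
      match k with
      | 0 =>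
        obtain ⟨m, hm⟩ : ∃ m : ℕ, n = 2*m + 1 := ⟨n/2, by omega⟩
        have e1 : EE (n+1) 0 = ch (n+1) j - ch (n+1) (j-1) :=
          EE_eval (by omega) (by push_cast; omega)
        have e2 : EE n 1 = ch n (j-1) - ch n (j-1-1) :=
          EE_eval (by omega) (by push_cast; omega)
        have hsymm : ch n j = ch n (j-1) := by
          have h1 : j = ((m+1 : ℕ) : ℤ) := by push_cast; omega
          have h2 : ((m+1:ℕ):ℤ) - 1 = ((m:ℕ):ℤ) := by push_cast; ring
          rw [h1, h2, ch_nat, ch_nat, hm, Nat.choose_symm_half]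
        show ((bb n 1 : ℕ) : ℤ) = EE (n+1) 0
        rw [IH 1, e1, e2, ch_pascal, ch_pascal, hsymm]
        ring
      | k+1 =>
        have e0 : EE (n+1) (k+1) = ch (n+1) j - ch (n+1) (j-1) :=
          EE_eval (by omega) (by push_cast; omega)
        have e1 : EE n k = ch n j - ch n (j-1) :=
          EE_eval (by omega) (by push_cast; omega)
        have e2 : EE n (k+2) = ch n (j-1) - ch n (j-1-1) :=
          EE_eval (by omega) (by push_cast; omega)
        show ((bb n k + bb n (k+2) : ℕ) : ℤ) = EE (n+1) (k+1)
        push_cast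
        rw [IH k, IH (k+2), e0, e1, e2, ch_pascal, ch_pascal]
        ring
    · match k with
      | 0 =>
        show ((bb n 1 : ℕ) : ℤ) = EE (n+1) 0
        rw [IH 1, EE_odd (by omega), EE_odd (by omega)]
      | k+1 =>
        show ((bb n k + bb n (k+2) : ℕ) : ℤ) = EE (n+1) (k+1)
        push_cast
        rw [IH k, IH (k+2), EE_odd (by omega), EE_odd (by omega), EE_odd (by omega)]
        ring

private lemma bb_odd {n : ℕ} (h : n % 2 = 1) : bb n 0 = 0 := by
  have := bbE n 0
  rw [EE_odd (by omega)] at this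
  exact_mod_cast this

private lemma bb_even (m : ℕ) : (bb (2*m) 0 : ℤ) = catalan m := by
  rw [bbE, EE_eval (by omega) (by push_cast; ring : ((2*m : ℕ) : ℤ) - ((0:ℕ):ℤ) = 2*(m:ℤ))]
  match m with
  | 0 =>
    rw [ch_neg (show ((0:ℕ):ℤ) - 1 < 0 by norm_num)]
    rw [ch_nat (2*0) 0]; simp
  | m+1 =>
    have e1 : ch (2*(m+1)) ((m+1:ℕ):ℤ) = (2*(m+1)).choose (m+1) := ch_nat _ _
    have h2 : ((m+1:ℕ):ℤ) - 1 = ((m:ℕ):ℤ) := by push_cast; ring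
    have e2 : ch (2*(m+1)) (((m+1:ℕ):ℤ) - 1) = (2*(m+1)).choose m := by rw [h2, ch_nat]
    rw [e1, e2]
    have hc : (m+2) * catalan (m+1) = Nat.centralBinom (m+1) :=
      succ_mul_catalan_eq_centralBinom (m+1)
    have hcb : Nat.centralBinom (m+1) = (2*(m+1)).choose (m+1) := rfl
    have hr : (2*(m+1)).choose (m+1) * (m+1) = (2*(m+1)).choose m * (m+2) := by
      have h := Nat.choose_succ_right_eq (2*(m+1)) m
      have h3 : 2*(m+1) - m = m + 2 := by omega
      rw [h3] at h; exact h
    have hcZ : ((m:ℤ)+2) * (catalan (m+1) : ℤ) = ((2*(m+1)).choose (m+1) : ℤ) := by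
      exact_mod_cast congrArg (Nat.cast : ℕ → ℤ) (hc.trans hcb)
    have hrZ : ((2*(m+1)).choose (m+1) : ℤ) * ((m:ℤ)+1) = ((2*(m+1)).choose m : ℤ) * ((m:ℤ)+2) := by
      exact_mod_cast congrArg (Nat.cast : ℕ → ℤ) hr
    have hne : ((m:ℤ)+2) ≠ 0 := by omega
    apply mul_left_cancel₀ hne
    linear_combination hrZ - hcZ

private lemma xi_apply {W : Type} [DecidableEq W] (w a : W) :
    (xi w : HG W) a = if a = w then 1 else 0 := by
  by_cases h : a = w
  · subst h; simp [xi, lp.single_apply_self]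
  · rw [if_neg h]; exact lp.single_apply_ne 2 w 1 h

private lemma coord {W : Type} [DecidableEq W] (h : W) (x : HG W) :
    (inner ℂ (xi h) x : ℂ) = x h := by
  rw [xi, lp.inner_single_left]
  simp

private lemma hg_ext {W : Type} [DecidableEq W] {x y : HG W}
    (H : ∀ h : W, (inner ℂ (xi h) x : ℂ) = inner ℂ (xi h) y) : x = y := by
  apply lp.ext
  funext h
  rw [← coord, ← coord]
  exact H h

theorem loop_semicircular_moments_catalan
    {W : Type} [DecidableEq W]
    (mul : W → W → Option W) (l v : W)
    -- the powers of the loop: `pow 0 = v`, `pow (k+1) = l · pow k`, all distinct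
    (pow : ℕ → W)
    (hpow0 : pow 0 = v)
    (hpowsucc : ∀ k : ℕ, mul l (pow k) = some (pow (k + 1)))
    (hpowinj : Function.Injective pow)
    -- `v` itself does not factor through `l`
    (hbase : ∀ h : W, mul l h ≠ some v)
    -- left cancellation for `l`
    (hinj : ∀ h₁ h₂ c : W, mul l h₁ = some c → mul l h₂ = some c → h₁ = h₂)
    (Ll : HG W →L[ℂ] HG W)
    (hLl : ∀ h : W, Ll (xi h) = (mul l h).elim 0 xi) :
    ∀ n : ℕ,
      (inner ℂ (xi v) (((Ll + ContinuousLinearMap.adjoint Ll) ^ n) (xi v)) : ℂ)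
        = if n % 2 = 1 then 0 else (catalan (n / 2) : ℂ) := by
  set T := Ll + ContinuousLinearMap.adjoint Ll with hT
  set e : ℕ → HG W := fun k => xi (pow k) with he
  -- Ll on basis
  have hLe : ∀ k : ℕ, Ll (e k) = e (k+1) := by
    intro k
    rw [he]
    simp only [hLl (pow k), hpowsucc k, Option.elim]
  -- adjoint coordinates
  have hadj_coord : ∀ (h : W) (y : HG W),
      (inner ℂ (xi h) (ContinuousLinearMap.adjoint Ll y) : ℂ) = inner ℂ (Ll (xi h)) y := by
    intro h y
    exact ContinuousLinearMap.adjoint_inner_right Ll (xi h) y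
  have hadj0 : ContinuousLinearMap.adjoint Ll (e 0) = 0 := by
    apply hg_ext
    intro h
    rw [hadj_coord, hLl h]
    cases hmul : mul l h with
    | none => simp [hmul]
    | some c =>
      have hc : c ≠ pow 0 := fun hc => hbase h (by rw [hmul, hc, hpow0])
      simp only [hmul, Option.elim]
      rw [he]
      simp only []
      rw [show (inner ℂ (xi c) (xi (pow 0)) : ℂ) = (xi (pow 0) : HG W) c from coord c _,
        xi_apply]
      simp [hc]
  have hadjS : ∀ k : ℕ, ContinuousLinearMap.adjoint Ll (e (k+1)) = e k := by
    intro k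
    apply hg_ext
    intro h
    rw [hadj_coord, hLl h]
    rw [show (inner ℂ (xi h) (e k) : ℂ) = (e k : HG W) h from coord h _]
    rw [he]; simp only []
    rw [xi_apply]
    cases hmul : mul l h with
    | none =>
      have hh : h ≠ pow k := by
        intro hh; rw [hh, hpowsucc k] at hmul; exact Option.some_ne_none _ hmul
      simp [hh]
    | some c =>
      simp only [Option.elim]
      rw [show (inner ℂ (xi c) (xi (pow (k+1))) : ℂ) = (xi (pow (k+1)) : HG W) c from coord c _,
        xi_apply]
      by_cases hh : h = pow k
      · have : c = pow (k+1) := by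
          rw [hh, hpowsucc k] at hmul; exact (Option.some_inj.mp hmul).symm
        simp [hh, this]
      · have : c ≠ pow (k+1) := by
          intro hc
          exact hh (hinj h (pow k) c hmul (by rw [hpowsucc k, hc]))
        simp [hh, this]
  -- T is self-adjoint
  have hTsa : ContinuousLinearMap.adjoint T = T := by
    rw [hT, map_add, ContinuousLinearMap.adjoint_adjoint, add_comm]
  -- action of T on basis
  have hTe0 : T (e 0) = e 1 := by
    rw [hT]
    simp only [ContinuousLinearMap.add_apply, hLe 0, hadj0, add_zero]
  have hTeS : ∀ k : ℕ, T (e (k+1)) = e (k+2) + e k := by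
    intro k
    rw [hT]
    simp only [ContinuousLinearMap.add_apply, hLe (k+1), hadjS k]
  have hsym : ∀ x y : HG W, (inner ℂ x (T y) : ℂ) = inner ℂ (T x) y := by
    intro x y
    conv_lhs => rw [← hTsa]
    exact ContinuousLinearMap.adjoint_inner_right T x y
  -- inner of basis vectors
  have hee : ∀ j k : ℕ, (inner ℂ (e j) (e k) : ℂ) = if j = k then 1 else 0 := by
    intro j k
    rw [he]; simp only []
    rw [show (inner ℂ (xi (pow j)) (xi (pow k)) : ℂ) = (xi (pow k) : HG W) (pow j) from coord _ _,
      xi_apply]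
    by_cases h : j = k
    · simp [h]
    · have : pow j ≠ pow k := fun hc => h (hpowinj hc)
      simp [h, this]
  -- the key moment computation
  have key : ∀ n j : ℕ, (inner ℂ (e j) ((T ^ n) (e 0)) : ℂ) = (bb n j : ℂ) := by
    intro n
    induction n with
    | zero =>
      intro j
      rw [pow_zero, ContinuousLinearMap.one_apply, hee]
      match j with
      | 0 => simp [bb]
      | j+1 => simp [bb]
    | succ n IH =>
      intro j
      rw [pow_succ', ContinuousLinearMap.mul_apply, hsym (e j) _]
      match j with
      | 0 =>
        rw [hTe0, IH 1]
        norm_num [bb]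
      | j+1 =>
        rw [hTeS j, inner_add_left, IH (j+2), IH j]
        show ((bb n (j+2) : ℕ) : ℂ) + ((bb n j : ℕ) : ℂ) = ((bb (n+1) (j+1) : ℕ) : ℂ)
        rw [show bb (n+1) (j+1) = bb n j + bb n (j+2) from rfl]
        push_cast; ring
  intro n
  have hv : xi v = e 0 := by rw [he]; simp only [hpow0]
  rw [hv, key n 0]
  by_cases hodd : n % 2 = 1
  · rw [if_pos hodd, bb_odd hodd]
    simp
  · rw [if_neg hodd]
    have h2 : n = 2 * (n / 2) := by omega
    have h3 : ((bb n 0 : ℕ) : ℤ) = ((bb (2*(n/2)) 0 : ℕ) : ℤ) := by rw [← h2]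
    exact_mod_cast h3.trans (bb_even (n/2))
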